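/- arXiv:1306.3795 — 4 statements merged into one kernel-verified Lean document; each statement's English description precedes it below -/
import Mathlib

section
/- In the well-pointed endofunctor setting below, for every object X of C the morphism T.map (α.app X) : T X ⟶ T (U X) is an isomorphism. (This is the general form of the paper's proposition that the natural transformation (−)^B ∘ Id → (−)^B ∘ U induced by α is an equivalence.) -/
open CategoryTheory CategoryTheory.Limits

universe v u

variable {C : Type u} [Category.{v} C]

def funIter (U : C ⥤ C) : ℕ → C ⥤ C
  | 0 => 𝟭 C
  | n + 1 => funIter U n ⋙ U

lemma funIter_obj_comm (U : C ⥤ C) (n : ℕ) (X : C) :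
    (funIter U n).obj (U.obj X) = U.obj ((funIter U n).obj X) := by
  induction n with
  | zero => rfl
  | succ n ih =>
      show U.obj ((funIter U n).obj (U.obj X)) = U.obj (U.obj ((funIter U n).obj X))
      rw [ih]

/-- The chain `X ⟶ U X ⟶ U² X ⟶ ⋯` with transition maps `α.app (Uⁿ X)`. -/
def chain (U : C ⥤ C) (α : 𝟭 C ⟶ U) (A : C) : ℕ ⥤ C :=
  Functor.ofSequence (X := fun n => (funIter U n).obj A)
    (fun n => α.app ((funIter U n).obj A))

/-- The functorial action of the chain construction. -/
def chainMap (U : C ⥤ C) (α : 𝟭 C ⟶ U) {A B : C} (f : A ⟶ B) :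
    chain U α A ⟶ chain U α B :=
  NatTrans.ofSequence (F := chain U α A) (G := chain U α B)
    (fun n => (funIter U n).map f)
    (fun n => by
      simp only [chain]
      erw [Functor.ofSequence_map_homOfLE_succ, Functor.ofSequence_map_homOfLE_succ]
      exact (α.naturality ((funIter U n).map f)).symm)

variable [HasColimitsOfShape ℕ C]

/-- `T X`, the colimit of the chain `X ⟶ U X ⟶ U² X ⟶ ⋯`. -/
noncomputable def Tobj (U : C ⥤ C) (α : 𝟭 C ⟶ U) (A : C) : C :=
  colimit (chain U α A)

/-- The action of `T` on morphisms. -/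
noncomputable def Tmap (U : C ⥤ C) (α : 𝟭 C ⟶ U) {A B : C} (f : A ⟶ B) :
    Tobj U α A ⟶ Tobj U α B :=
  colimMap (chainMap U α f)

/-- The component `ι.app A : A ⟶ T A`, the colimit cocone leg at stage `0`. -/
noncomputable def tUnit (U : C ⥤ C) (α : 𝟭 C ⟶ U) (A : C) : A ⟶ Tobj U α A :=
  colimit.ι (chain U α A) 0


lemma iterMap_alpha (U : C ⥤ C) (α : 𝟭 C ⟶ U)
    (hwp : ∀ X : C, U.map (α.app X) = α.app (U.obj X)) (n : ℕ) (X : C) :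
    (funIter U n).map (α.app X) =
      α.app ((funIter U n).obj X) ≫ eqToHom (funIter_obj_comm U n X).symm := by
  induction n with
  | zero => simp [funIter]
  | succ n ih =>
      show U.map ((funIter U n).map (α.app X)) = _
      rw [ih, U.map_comp, eqToHom_map, hwp]
      rfl

lemma alpha_eqToHom (U : C ⥤ C) (α : 𝟭 C ⟶ U) {A B : C} (h : A = B) :
    α.app A ≫ eqToHom (congrArg U.obj h) = eqToHom h ≫ α.app B := by
  subst h; simp

lemma chain_ι_succ (U : C ⥤ C) (α : 𝟭 C ⟶ U) (A : C) (n : ℕ) :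
    colimit.ι (chain U α A) n =
      α.app ((funIter U n).obj A) ≫ colimit.ι (chain U α A) (n + 1) := by
  rw [← colimit.w (chain U α A) (homOfLE (Nat.le_succ n))]
  congr 1
  exact Functor.ofSequence_map_homOfLE_succ _ n

lemma alpha_eqToHom2 (U : C ⥤ C) (α : 𝟭 C ⟶ U) {A B : C} (h : A = U.obj B)
    (h2 : U.obj A = U.obj (U.obj B)) :
    α.app A ≫ eqToHom h2 = eqToHom h ≫ α.app (U.obj B) := by
  subst h; simp

theorem stmt1 (U : C ⥤ C) (α : 𝟭 C ⟶ U)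
    [PreservesColimitsOfShape ℕ U]
    (hwp : ∀ X : C, U.map (α.app X) = α.app (U.obj X)) (X : C) :
    IsIso (Tmap U α (α.app X)) := by
  have hcomm : ∀ n, (funIter U n).obj (U.obj X) = U.obj ((funIter U n).obj X) :=
    fun n => funIter_obj_comm U n X
  have key : ∀ n, α.app ((funIter U n).obj (U.obj X)) ≫ eqToHom (hcomm (n+1)) =
      eqToHom (hcomm n) ≫ α.app ((funIter U (n+1)).obj X) :=
    fun n => alpha_eqToHom2 U α (hcomm n) (hcomm (n+1))
  -- the inverse cocone
  let ι : chain U α (U.obj X) ⟶ (Functor.const ℕ).obj (Tobj U α X) :=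
    NatTrans.ofSequence
      (fun n => eqToHom (hcomm n) ≫ colimit.ι (chain U α X) (n+1))
      (fun n => by
        rw [show (chain U α (U.obj X)).map (homOfLE (n.le_add_right 1)) =
          α.app ((funIter U n).obj (U.obj X)) from
            Functor.ofSequence_map_homOfLE_succ _ n]
        simp only [Functor.const_obj_map, Category.comp_id]
        erw [← Category.assoc, key n, Category.assoc,
          ← chain_ι_succ U α X (n+1)]
        exact (Category.comp_id _).symm)
  let g : Tobj U α (U.obj X) ⟶ Tobj U α X :=
    colimit.desc (chain U α (U.obj X)) ⟨Tobj U α X, ι⟩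
  refine ⟨g, ?_, ?_⟩
  · apply colimit.hom_ext
    intro n
    simp only [Tmap, Tobj, Category.comp_id, ι_colimMap_assoc, colimit.ι_desc, g, ι]
    rw [show (chainMap U α (α.app X)).app n = (funIter U n).map (α.app X) from rfl,
      iterMap_alpha U α hwp n X]
    erw [NatTrans.ofSequence_app, Category.assoc, eqToHom_trans_assoc,
      eqToHom_refl, Category.id_comp]
    exact (chain_ι_succ U α X n).symm
  · apply colimit.hom_ext
    intro n
    simp only [Tmap, Tobj, Category.comp_id, colimit.ι_desc_assoc, g, ι,
      NatTrans.ofSequence_app, Category.assoc, ι_colimMap]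
    erw [NatTrans.ofSequence_app, Category.assoc, ι_colimMap]
    rw [show (chainMap U α (α.app X)).app (n+1) = (funIter U (n+1)).map (α.app X) from rfl,
      iterMap_alpha U α hwp (n+1) X]
    rw [chain_ι_succ U α (U.obj X) n]
    erw [← Category.assoc, ← Category.assoc]
    erw [← key n]
    erw [Category.assoc (α.app _), eqToHom_trans, eqToHom_refl, Category.comp_id]
    rfl
end

section
/- In the well-pointed endofunctor setting below, for every object X of C the canonical comparison morphism T (U X) ⟶ U (T X) is an isomorphism. Here this morphism is determined on the colimit leg at stage n (whose source is U^{n+1} X) as U applied to the stage-n colimit leg of ch(X); it is well defined because, by well-pointedness, the chain ch(U X) coincides with the composite chain ch(X) ⋙ U. (This is the general form of the paper's proposition that the natural map (−)^B ∘ U → U ∘ (−)^B is an equivalence.) -/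
open CategoryTheory CategoryTheory.Limits

universe v u

variable {C : Type u} [Category.{v} C]

variable [HasColimitsOfShape ℕ C]

/-- The canonical comparison `T (U X) ⟶ U (T X)`, determined on the colimit leg at
stage `n` (whose source is `Uⁿ (U X) = Uⁿ⁺¹ X`) as `U` applied to the stage-`n`
colimit leg of the chain of `X`; it is a well-defined cocone thanks to
well-pointedness of `α`. -/
noncomputable def cmpMap (U : C ⥤ C) (α : 𝟭 C ⟶ U)
    (hwp : ∀ X : C, U.map (α.app X) = α.app (U.obj X)) (X : C) :
    Tobj U α (U.obj X) ⟶ U.obj (Tobj U α X) :=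
  colimit.desc (chain U α (U.obj X))
    { pt := U.obj (Tobj U α X)
      ι := NatTrans.ofSequence
        (fun n => eqToHom (funIter_obj_comm U n X) ≫ U.map (colimit.ι (chain U α X) n))
        (fun n => by
          have hw := colimit.w (chain U α X) (homOfLE (n.le_add_right 1))
          simp only [chain] at hw ⊢
          erw [Functor.ofSequence_map_homOfLE_succ] at hw
          erw [Functor.ofSequence_map_homOfLE_succ]
          have hnat := α.naturality (eqToHom (funIter_obj_comm U n X))
          simp only [Functor.id_map, eqToHom_map] at hnat
          simp only [Functor.const_obj_map, Category.comp_id, ← hw, Functor.map_comp, hwp,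
            ← Category.assoc]
          erw [Category.comp_id, Functor.map_comp, hwp, ← Category.assoc, ← Category.assoc, ← hnat]
          rfl) }

theorem stmt2 (U : C ⥤ C) (α : 𝟭 C ⟶ U)
    [PreservesColimitsOfShape ℕ U]
    (hwp : ∀ X : C, U.map (α.app X) = α.app (U.obj X)) (X : C) :
    IsIso (cmpMap U α hwp X) := by
  let η : chain U α (U.obj X) ⟶ chain U α X ⋙ U :=
    NatTrans.ofSequence (fun n => eqToHom (by exact funIter_obj_comm U n X))
      (fun n => by
        simp only [chain, Functor.comp_map]
        erw [Functor.ofSequence_map_homOfLE_succ, Functor.ofSequence_map_homOfLE_succ, hwp]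
        have hnat := α.naturality (eqToHom (funIter_obj_comm U n X))
        simp only [Functor.id_map, eqToHom_map] at hnat
        exact hnat.symm)
  haveI : ∀ n : ℕ, IsIso (η.app n) := fun n => by
    simp only [η, NatTrans.ofSequence_app]; exact (eqToIso (funIter_obj_comm U n X)).isIso_hom
  haveI : IsIso η := NatIso.isIso_of_isIso_app η
  haveI : IsIso (colimMap η) := (colim.mapIso (asIso η)).isIso_hom
  have heq : cmpMap U α hwp X =
      colimMap η ≫ (preservesColimitIso U (chain U α X)).inv := by
    apply colimit.hom_ext
    intro n
    simp only [cmpMap, colimit.ι_desc, NatTrans.ofSequence_app, ι_colimMap_assoc,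
      ι_preservesColimitIso_inv, η]
    erw [ι_colimMap_assoc, ι_preservesColimitIso_inv, NatTrans.ofSequence_app]
    rfl
  rw [heq]
  exact IsIso.comp_isIso' this (preservesColimitIso U (chain U α X)).isIso_inv
end

section
/- In the well-pointed endofunctor setting below, for every object X of C the morphism α.app (T X) : T X ⟶ U (T X) is an isomorphism; consequently, for every n ≥ 0 the transition map α.app (Uⁿ (T X)) : Uⁿ (T X) ⟶ U^{n+1} (T X) is an isomorphism, i.e. every map in the chain T X → U (T X) → U² (T X) → ⋯ is an isomorphism. (This is the paper's claim that the canonical maps T → U ∘ T → U² ∘ T → ⋯ are all equivalences.) -/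
open CategoryTheory CategoryTheory.Limits

universe v u

variable {C : Type u} [Category.{v} C]

variable [HasColimitsOfShape ℕ C]

section aux

variable (U : C ⥤ C) (α : 𝟭 C ⟶ U) [PreservesColimitsOfShape ℕ U]
  (hwp : ∀ X : C, U.map (α.app X) = α.app (U.obj X)) (X : C)

/-- The cocone over `U ∘ chain` with legs the colimit legs at stage `n+1`. -/
noncomputable def shiftCocone (hwp : ∀ X : C, U.map (α.app X) = α.app (U.obj X)) (X : C) :
    Cocone (chain U α X ⋙ U) where
  pt := Tobj U α X
  ι := NatTrans.ofSequence
    (fun n => colimit.ι (chain U α X) (n + 1))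
    (fun n => by
      have h : (chain U α X ⋙ U).map (homOfLE (Nat.le_add_right n 1)) =
          U.map (α.app ((funIter U n).obj X)) := by
        exact congrArg U.map (Functor.ofSequence_map_homOfLE_succ _ n)
      rw [h, hwp]
      have := colimit.w (chain U α X) (homOfLE (Nat.le_add_right (n + 1) 1))
      rw [show (chain U α X).map (homOfLE (Nat.le_add_right (n + 1) 1)) =
          α.app ((funIter U (n+1)).obj X) from
        Functor.ofSequence_map_homOfLE_succ _ (n+1)] at this
      exact this.trans (Category.comp_id _).symm)

noncomputable def hcU : IsColimit (U.mapCocone (colimit.cocone (chain U α X))) :=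
  isColimitOfPreserves U (colimit.isColimit _)

noncomputable def ginv : U.obj (Tobj U α X) ⟶ Tobj U α X :=
  (hcU U α X).desc (shiftCocone U α hwp X)

lemma ginv_fac (n : ℕ) :
    U.map (colimit.ι (chain U α X) n) ≫ ginv U α hwp X =
      colimit.ι (chain U α X) (n + 1) :=
  (hcU U α X).fac (shiftCocone U α hwp X) n

lemma comp_ginv : α.app (Tobj U α X) ≫ ginv U α hwp X = 𝟙 _ := by
  apply colimit.hom_ext
  intro n
  dsimp only [Functor.id_obj]
  have hnat : α.app ((chain U α X).obj n) ≫ U.map (colimit.ι (chain U α X) n) =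
      colimit.ι (chain U α X) n ≫ α.app (Tobj U α X) := by
    exact (α.naturality (colimit.ι (chain U α X) n)).symm
  have hw := colimit.w (chain U α X) (homOfLE (Nat.le_add_right n 1))
  rw [show (chain U α X).map (homOfLE (Nat.le_add_right n 1)) =
      α.app ((funIter U n).obj X) from Functor.ofSequence_map_homOfLE_succ _ n] at hw
  have key : colimit.ι (chain U α X) n ≫ α.app (Tobj U α X) ≫ ginv U α hwp X =
      colimit.ι (chain U α X) n := by
    refine (Category.assoc _ _ _).symm.trans ?_
    rw [← hnat]; erw [Category.assoc, ginv_fac]; exact hw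
  exact key.trans (Category.comp_id _).symm

lemma ginv_comp : ginv U α hwp X ≫ α.app (Tobj U α X) = 𝟙 _ := by
  apply (hcU U α X).hom_ext
  intro n
  have hnat : α.app ((chain U α X).obj (n + 1)) ≫ U.map (colimit.ι (chain U α X) (n + 1)) =
      colimit.ι (chain U α X) (n + 1) ≫ α.app (Tobj U α X) := by
    exact (α.naturality (colimit.ι (chain U α X) (n + 1))).symm
  have h0 : α.app ((chain U α X).obj (n+1)) = U.map (α.app ((funIter U n).obj X)) :=
    (hwp _).symm
  have hw := colimit.w (chain U α X) (homOfLE (Nat.le_add_right n 1))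
  rw [show (chain U α X).map (homOfLE (Nat.le_add_right n 1)) =
      α.app ((funIter U n).obj X) from Functor.ofSequence_map_homOfLE_succ _ n] at hw
  have key : U.map (colimit.ι (chain U α X) n) ≫ ginv U α hwp X ≫ α.app (Tobj U α X) =
      U.map (colimit.ι (chain U α X) n) := by
    refine (Category.assoc _ _ _).symm.trans ?_
    rw [ginv_fac]; erw [← hnat]; rw [h0]; erw [← U.map_comp, hw]; rfl
  exact key.trans (Category.comp_id _).symm

end aux

/-- For a well-pointed endofunctor `U` with unit `α`, the morphism
`α.app (T X) : T X ⟶ U (T X)` is an isomorphism, and consequently every transition map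
`α.app (Uⁿ (T X)) : Uⁿ (T X) ⟶ Uⁿ⁺¹ (T X)` of the chain `T X ⟶ U (T X) ⟶ U² (T X) ⟶ ⋯`
is an isomorphism. -/
theorem stmt3 (U : C ⥤ C) (α : 𝟭 C ⟶ U)
    [PreservesColimitsOfShape ℕ U]
    (hwp : ∀ X : C, U.map (α.app X) = α.app (U.obj X)) (X : C) :
    IsIso (α.app (Tobj U α X)) ∧
      ∀ n : ℕ, IsIso (α.app ((funIter U n).obj (Tobj U α X))) := by
  have h0 : IsIso (α.app (Tobj U α X)) :=
    ⟨ginv U α hwp X, comp_ginv U α hwp X, ginv_comp U α hwp X⟩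
  refine ⟨h0, fun n => ?_⟩
  induction n with
  | zero => exact h0
  | succ n ih =>
      show IsIso (α.app (U.obj ((funIter U n).obj (Tobj U α X))))
      rw [← hwp]
      infer_instance
end

section
/- In the well-pointed endofunctor setting below, T exhibits a reflective localization of C onto the ι-local objects: for every object X of C and every object Y of C such that ι.app Y : Y ⟶ T Y is an isomorphism, the map Hom_C(T X, Y) ⟶ Hom_C(X, Y) given by precomposition with ι.app X (g ↦ ι.app X ≫ g) is a bijection. -/
open CategoryTheory CategoryTheory.Limits

universe v u

variable {C : Type u} [Category.{v} C]

variable [HasColimitsOfShape ℕ C]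

section Aux

variable (U : C ⥤ C) (α : 𝟭 C ⟶ U)

lemma chain_w (A : C) (n : ℕ) :
    α.app ((funIter U n).obj A) ≫ colimit.ι (chain U α A) (n + 1) =
      colimit.ι (chain U α A) n := by
  have w := colimit.w (chain U α A) (homOfLE (Nat.le_add_right n 1))
  rw [show (chain U α A).map (homOfLE (Nat.le_add_right n 1))
      = α.app ((funIter U n).obj A) from
    Functor.ofSequence_map_homOfLE_succ _ n] at w
  exact w

lemma alpha_iso (Y : C) (hwp : ∀ Z : C, U.map (α.app Z) = α.app (U.obj Z))
    (hY : IsIso (tUnit U α Y)) : IsIso (α.app Y) := by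
  haveI : IsIso (tUnit U α Y) := hY
  let r : U.obj Y ⟶ Y := colimit.ι (chain U α Y) 1 ≫ @inv _ _ _ _ (tUnit U α Y) hY
  have h1 : α.app Y ≫ r = 𝟙 Y := by
    show α.app Y ≫ colimit.ι (chain U α Y) 1 ≫ @inv _ _ _ _ (tUnit U α Y) hY = 𝟙 Y
    refine (Category.assoc _ _ _).symm.trans ?_
    rw [show α.app Y ≫ colimit.ι (chain U α Y) 1 = tUnit U α Y from chain_w U α Y 0]
    exact @IsIso.hom_inv_id _ _ _ _ (tUnit U α Y) hY
  have h2 : r ≫ α.app Y = 𝟙 (U.obj Y) := by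
    have nat := α.naturality r
    simp only [Functor.id_map] at nat
    rw [nat, ← hwp Y, ← U.map_comp, h1]
    exact U.map_id Y
  exact ⟨r, h1, h2⟩

lemma leg_succ (X Y : C) (hwp : ∀ Z : C, U.map (α.app Z) = α.app (U.obj Z))
    [IsIso (α.app Y)] (g : Tobj U α X ⟶ Y) (n : ℕ) :
    colimit.ι (chain U α X) (n + 1) ≫ g =
      U.map (colimit.ι (chain U α X) n ≫ g) ≫ inv (α.app Y) := by
  set h : (funIter U (n + 1)).obj X ⟶ Y := colimit.ι (chain U α X) (n + 1) ≫ g with hh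
  have e1 : h ≫ α.app Y = U.map (colimit.ι (chain U α X) n ≫ g) := by
    have nat := α.naturality h
    simp only [Functor.id_map] at nat
    rw [nat]
    rw [show α.app ((funIter U (n + 1)).obj X)
        = U.map (α.app ((funIter U n).obj X)) from (hwp _).symm]
    refine (U.map_comp _ _).symm.trans ?_
    congr 1
    rw [hh]
    exact (Category.assoc _ _ _).symm.trans (congrArg (· ≫ g) (chain_w U α X n))
  exact (IsIso.eq_comp_inv _).mpr e1

end Aux

/-- `T` exhibits a reflective localization of `C` onto the `ι`-local objects:
for every `X` and every `Y` such that `ι.app Y : Y ⟶ T Y` is an isomorphism,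
precomposition with `ι.app X` gives a bijection `Hom(T X, Y) ≃ Hom(X, Y)`. -/
theorem stmt5 (U : C ⥤ C) (α : 𝟭 C ⟶ U)
    [PreservesColimitsOfShape ℕ U]
    (hwp : ∀ X : C, U.map (α.app X) = α.app (U.obj X)) (X Y : C)
    (hY : IsIso (tUnit U α Y)) :
    Function.Bijective (fun g : Tobj U α X ⟶ Y => tUnit U α X ≫ g) := by
  haveI : IsIso (α.app Y) := alpha_iso U α Y hwp hY
  constructor
  · intro g g' h
    simp only at h
    apply colimit.hom_ext
    intro n
    induction n with
    | zero => exact h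
    | succ n ih => rw [leg_succ U α X Y hwp g n, leg_succ U α X Y hwp g' n, ih]
  · intro f
    refine ⟨Tmap U α f ≫ inv (tUnit U α Y), ?_⟩
    have e : tUnit U α X ≫ Tmap U α f = f ≫ tUnit U α Y := by
      show colimit.ι (chain U α X) 0 ≫ colimMap (chainMap U α f) = _
      rw [ι_colimMap]
      rfl
    show tUnit U α X ≫ Tmap U α f ≫ inv (tUnit U α Y) = f
    rw [← Category.assoc, e, Category.assoc, IsIso.hom_inv_id, Category.comp_id]
end
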